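/- Among all MHR distributions on positive integers with mean μ, the geometric distribution with mean μ is second-order stochastically dominated by every other such distribution; equivalently, for every positive integer c, E_{x~D}[max(c - x, 0)] ≤ E_{x~G}[max(c - x, 0)] for any MHR distribution D with mean μ, where G is the geometric distribution with mean μ. -/

import Mathlib

open Filter Finset

/-- Double-counting identity: `∑_{k ≤ c} f k (c - k) = ∑_{j < c} ∑_{k ≤ j} f k`. -/
lemma sum_mul_sub_eq (f : ℕ → ℝ) (c : ℕ) :
    ∑ k ∈ Finset.range (c + 1), f k * ((c : ℝ) - k) =
      ∑ j ∈ Finset.range c, ∑ k ∈ Finset.range (j + 1), f k := by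
  induction c with
  | zero => simp
  | succ c ih =>
      rw [Finset.sum_range_succ (fun k => f k * (((c : ℕ) + 1 : ℕ) - k : ℝ))]
      push_cast
      have : ∑ k ∈ Finset.range (c + 1), f k * ((c : ℝ) + 1 - k) =
          ∑ k ∈ Finset.range (c + 1), (f k * ((c : ℝ) - k) + f k) := by
        apply Finset.sum_congr rfl; intro k _; ring
      rw [this, Finset.sum_add_distrib, ih,
        Finset.sum_range_succ (fun j => ∑ k ∈ Finset.range (j + 1), f k) c,
        Finset.sum_range_succ f c]
      ring

/-- The geometric distribution with mean μ is second-order stochastically dominated by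
every MHR distribution `p` on positive integers with the same mean μ: for every positive
integer c, E_{x ~ p}[max(c - x, 0)] ≤ E_{x ~ Geom(1/μ)}[max(c - x, 0)]. -/
theorem mhr_sosd_geometric (p : ℕ → ℝ) (hp0 : p 0 = 0) (hnn : ∀ k, 0 ≤ p k)
    (hsum : ∑' k, p k = 1)
    (T : ℕ → ℝ) (hT : ∀ k, T k = ∑' j : ℕ, p (k + j))
    (hMHR : ∀ k, 1 ≤ k → T (k + 2) / T (k + 1) ≤ T (k + 1) / T k)
    (μ : ℝ) (hμ : 1 ≤ μ) (hms : Summable (fun k : ℕ => p k * k))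
    (hmean : ∑' k : ℕ, p k * k = μ) :
    ∀ c : ℕ, 1 ≤ c →
      ∑' k : ℕ, p k * max ((c : ℝ) - k) 0 ≤
        ∑' k : ℕ, (if k = 0 then (0 : ℝ) else (1 / μ) * (1 - 1 / μ) ^ (k - 1)) *
          max ((c : ℝ) - k) 0 := by
  intro c hc
  set q : ℝ := 1 - 1 / μ with hqdef
  have hμ0 : (0 : ℝ) < μ := lt_of_lt_of_le one_pos hμ
  have hμne : μ ≠ 0 := ne_of_gt hμ0
  have hq0 : 0 ≤ q := by
    have h1 : 1 / μ ≤ 1 := by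
      rw [div_le_one hμ0]; exact hμ
    rw [hqdef]; linarith
  have hq1 : q < 1 := by
    have h1 : 0 < 1 / μ := by positivity
    rw [hqdef]; linarith
  -- summability of p
  have hsp : Summable p := by
    by_contra h
    rw [tsum_eq_zero_of_not_summable h] at hsum
    norm_num at hsum
  -- basic facts about T
  have hTrec : ∀ k, T k = p k + T (k + 1) := by
    intro k
    rw [hT k, hT (k + 1)]
    have hs : Summable (fun j => p (k + j)) := by
      have := (summable_nat_add_iff (f := p) k).2 hsp
      exact this.congr (fun j => by rw [add_comm])
    have := Summable.tsum_eq_zero_add hs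
    simpa [add_comm, add_assoc, add_left_comm] using this
  have hTnn : ∀ k, 0 ≤ T k := by
    intro k; rw [hT k]; exact tsum_nonneg (fun j => hnn _)
  have hT0 : T 0 = 1 := by
    rw [hT 0]; simpa using hsum
  have hT1 : T 1 = 1 := by
    have := hTrec 0; rw [hp0, hT0] at this; linarith
  have hTmono : ∀ k, T (k + 1) ≤ T k := by
    intro k; have := hTrec k; have := hnn k; linarith
  -- partial sums of p
  have hpart : ∀ n : ℕ, ∑ k ∈ Finset.range n, p k = 1 - T n := by
    intro n
    have h1 := Summable.sum_add_tsum_nat_add (f := p) n hsp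
    have h2 : ∑' i, p (i + n) = T n := by
      rw [hT n]; exact tsum_congr fun i => by rw [add_comm]
    rw [h2, hsum] at h1
    linarith
  -- single-crossing step
  have hstep : ∀ k, 1 ≤ k → T (k + 1) ≤ q * T k → T (k + 2) ≤ q * T (k + 1) := by
    intro k hk hle
    rcases eq_or_lt_of_le (hTnn (k + 1)) with h0 | h0
    · have : T (k + 2) ≤ T (k + 1) := hTmono (k + 1)
      have h2 : 0 ≤ T (k + 2) := hTnn (k + 2)
      nlinarith [hq0]
    · have hTk : 0 < T k := lt_of_lt_of_le h0 (hTmono k)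
      have h1 : T (k + 1) / T k ≤ q := by
        rw [div_le_iff₀ hTk]; linarith [hle]
      have h2 := le_trans (hMHR k hk) h1
      rw [div_le_iff₀ h0] at h2
      linarith
  -- tail bound: n * T n ≤ tail of p k * k
  have htail_le : ∀ n : ℕ, (n : ℝ) * T n ≤ ∑' i, p (n + i) * ((n : ℝ) + i) := by
    intro n
    have hs1 : Summable (fun j => p (n + j)) := by
      have := (summable_nat_add_iff (f := p) n).2 hsp
      exact this.congr (fun j => by rw [add_comm])
    have hs2 : Summable (fun i => p (n + i) * ((n : ℝ) + i)) := by
      have := (summable_nat_add_iff (f := fun k : ℕ => p k * k) n).2 hms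
      exact this.congr (fun j => by rw [add_comm]; push_cast; ring)
    rw [hT n, ← tsum_mul_left]
    refine Summable.tsum_le_tsum (fun i => ?_) (hs1.mul_left _) hs2
    have : (n : ℝ) ≤ (n : ℝ) + i := le_add_of_nonneg_right (by positivity)
    nlinarith [hnn (n + i)]
  have htail0 : Tendsto (fun n : ℕ => ∑' i, p (n + i) * ((n : ℝ) + i)) atTop (nhds 0) := by
    have h := tendsto_sum_nat_add (f := fun k : ℕ => p k * k)
    refine h.congr fun n => tsum_congr fun i => ?_
    rw [add_comm i n]; push_cast; ring
  have hnT0 : Tendsto (fun n : ℕ => (n : ℝ) * T n) atTop (nhds 0) := by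
    exact squeeze_zero (fun n => mul_nonneg (Nat.cast_nonneg n) (hTnn n)) htail_le htail0
  -- partial sums of T
  have hpartialT : ∀ n : ℕ, ∑ j ∈ Finset.range n, T (j + 1) =
      (∑ k ∈ Finset.range n, p k * k) + (n : ℝ) * T n := by
    intro n
    induction n with
    | zero => simp
    | succ n ih =>
        rw [Finset.sum_range_succ, ih, Finset.sum_range_succ]
        have := hTrec n
        push_cast
        nlinarith [this]
  have hHasT : HasSum (fun j : ℕ => T (j + 1)) μ := by
    rw [hasSum_iff_tendsto_nat_of_nonneg (fun j => hTnn (j + 1))]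
    have h1 : Tendsto (fun n : ℕ => ∑ k ∈ Finset.range n, p k * k) atTop (nhds μ) := by
      have := hms.hasSum.tendsto_sum_nat
      rwa [hmean] at this
    have := h1.add hnT0
    rw [add_zero] at this
    exact Tendsto.congr (fun n => (hpartialT n).symm) this
  have hsT : Summable (fun j : ℕ => T (j + 1)) := hHasT.summable
  have htsT : ∑' j : ℕ, T (j + 1) = μ := hHasT.tsum_eq
  have hsq : Summable (fun j : ℕ => q ^ j) := summable_geometric_of_lt_one hq0 hq1
  have hgeosum : ∑' j : ℕ, q ^ j = μ := by
    rw [tsum_geometric_of_lt_one hq0 hq1]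
    rw [hqdef]; field_simp; ring
  -- main inequality (F)
  have hF : ∑ j ∈ Finset.range c, q ^ j ≤ ∑ j ∈ Finset.range c, T (j + 1) := by
    by_cases hcase : ∀ j < c, q ^ j ≤ T (j + 1)
    · exact Finset.sum_le_sum fun j hj => hcase j (Finset.mem_range.mp hj)
    · push_neg at hcase
      obtain ⟨j0, hj0c, hj0⟩ := hcase
      have hex : ∃ j, T (j + 1) < q ^ j := ⟨j0, hj0⟩
      obtain ⟨m, hm, hmin⟩ : ∃ m, T (m + 1) < q ^ m ∧ ∀ j < m, q ^ j ≤ T (j + 1) :=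
        ⟨Nat.find hex, Nat.find_spec hex, fun j hj => le_of_not_gt (Nat.find_min hex hj)⟩
      have hmc : m < c := by
        by_contra h
        push_neg at h
        have := hmin j0 (by omega)
        linarith
      have hm1 : 1 ≤ m := by
        by_contra h
        push_neg at h
        interval_cases m
        simp [hT1] at hm
      -- base: T (m+1) ≤ q * T m
      obtain ⟨m', rfl⟩ : ∃ m', m = m' + 1 := ⟨m - 1, by omega⟩
      have hbase : T (m' + 1 + 1) ≤ q * T (m' + 1) := by
        have h1 : q ^ m' ≤ T (m' + 1) := hmin m' (by omega)
        have : T (m' + 1 + 1) < q ^ (m' + 1) := hm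
        calc T (m' + 1 + 1) ≤ q ^ (m' + 1) := le_of_lt hm
          _ = q * q ^ m' := by ring
          _ ≤ q * T (m' + 1) := by nlinarith [hq0]
      have hchain : ∀ j, m' + 1 ≤ j → T (j + 2) ≤ q * T (j + 1) := by
        intro j hj
        induction j, hj using Nat.le_induction with
        | base => exact hstep (m' + 1) (by omega) hbase
        | succ j hj ih => exact hstep (j + 1) (by omega) ih
      have hgeo : ∀ j, m' + 1 ≤ j → T (j + 1) ≤ q ^ j := by
        intro j hj
        induction j, hj using Nat.le_induction with
        | base => exact le_of_lt hm
        | succ j hj ih =>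
            calc T (j + 1 + 1) ≤ q * T (j + 1) := hchain j hj
              _ ≤ q * q ^ j := by nlinarith [hq0]
              _ = q ^ (j + 1) := by ring
      -- tail comparison
      have hsT' : Summable (fun i : ℕ => T (i + c + 1)) := by
        have := (summable_nat_add_iff (f := fun j : ℕ => T (j + 1)) c).2 hsT
        exact this
      have hsq' : Summable (fun i : ℕ => q ^ (i + c)) := by
        have := (summable_nat_add_iff (f := fun j : ℕ => q ^ j) c).2 hsq
        exact this
      have htail : ∑' i : ℕ, T (i + c + 1) ≤ ∑' i : ℕ, q ^ (i + c) := by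
        refine Summable.tsum_le_tsum (fun i => hgeo (i + c) (by omega)) hsT' hsq'
      have e1 := Summable.sum_add_tsum_nat_add (f := fun j : ℕ => T (j + 1)) c hsT
      have e2 := Summable.sum_add_tsum_nat_add (f := fun j : ℕ => q ^ j) c hsq
      rw [htsT] at e1
      rw [hgeosum] at e2
      linarith
  -- rewrite both sides as finite sums
  set g : ℕ → ℝ := fun k => if k = 0 then (0 : ℝ) else (1 / μ) * q ^ (k - 1) with hgdef
  have hvanish : ∀ (f : ℕ → ℝ) (k : ℕ), k ∉ Finset.range (c + 1) →
      f k * max ((c : ℝ) - k) 0 = 0 := by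
    intro f k hk
    rw [Finset.mem_range, not_lt] at hk
    have : ((c : ℝ) - k) ≤ 0 := by
      have : (c : ℝ) ≤ k := by exact_mod_cast le_trans (Nat.le_succ c) hk
      linarith
    rw [max_eq_right this, mul_zero]
  have hfin : ∀ f : ℕ → ℝ, ∑' k : ℕ, f k * max ((c : ℝ) - k) 0 =
      ∑ k ∈ Finset.range (c + 1), f k * ((c : ℝ) - k) := by
    intro f
    rw [tsum_eq_sum (hvanish f)]
    refine Finset.sum_congr rfl fun k hk => ?_
    rw [Finset.mem_range] at hk
    have : (0 : ℝ) ≤ (c : ℝ) - k := by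
      have : (k : ℝ) ≤ c := by exact_mod_cast Nat.lt_succ_iff.mp hk
      linarith
    rw [max_eq_left this]
  rw [hfin p, hfin g, sum_mul_sub_eq p c, sum_mul_sub_eq g c]
  have hB : ∀ j : ℕ, ∑ k ∈ Finset.range (j + 1), g k = 1 - q ^ j := by
    intro j
    rw [Finset.sum_range_succ' g j]
    have hg0 : g 0 = 0 := by simp [hgdef]
    have hgi : ∀ i : ℕ, g (i + 1) = (1 / μ) * q ^ i := by
      intro i; simp [hgdef]
    rw [hg0, add_zero, Finset.sum_congr rfl (fun i _ => hgi i),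
      ← Finset.mul_sum, geom_sum_eq (ne_of_lt hq1)]
    have hq1' : q - 1 ≠ 0 := by intro h; apply ne_of_lt hq1; linarith
    have h1q : 1 - q = 1 / μ := by rw [hqdef]; ring
    rw [← h1q]
    field_simp
    ring
  have hA : ∀ j : ℕ, ∑ k ∈ Finset.range (j + 1), p k = 1 - T (j + 1) := fun j => hpart (j + 1)
  calc ∑ j ∈ Finset.range c, ∑ k ∈ Finset.range (j + 1), p k
      = ∑ j ∈ Finset.range c, (1 - T (j + 1)) := Finset.sum_congr rfl fun j _ => hA j
    _ = (c : ℝ) - ∑ j ∈ Finset.range c, T (j + 1) := by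
        rw [Finset.sum_sub_distrib]; simp
    _ ≤ (c : ℝ) - ∑ j ∈ Finset.range c, q ^ j := by linarith
    _ = ∑ j ∈ Finset.range c, (1 - q ^ j) := by
        rw [Finset.sum_sub_distrib]; simp
    _ = ∑ j ∈ Finset.range c, ∑ k ∈ Finset.range (j + 1), g k :=
        Finset.sum_congr rfl fun j _ => (hB j).symm
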